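/- Let G be a bipartite graph on X ⊔ Y without isolated vertices, and for each subset I ⊆ X let C_I be the set of vertices y ∈ Y whose neighborhood in X is exactly I, with c_I = |C_I|. For a positive integer r, the induced matching number of G is at least r if and only if there exist subsets J_1,...,J_r of X such that no J_i is contained in the union of the others and c_{J_1}·c_{J_2}···c_{J_r} > 0. -/

import Mathlib

/-- `a b : Fin r → V` describe a matching of size `r` in `G`:
the edges `aᵢbᵢ` are pairwise disjoint edges of `G`. -/
def IsMatchingPair {V : Type*} (G : SimpleGraph V) (r : ℕ) (a b : Fin r → V) : Prop :=
  (∀ i, G.Adj (a i) (b i)) ∧ Function.Injective a ∧ Function.Injective b ∧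
    (∀ i j, a i ≠ b j)

/-- An induced matching: a matching such that no two of its edges are joined by an edge. -/
def IsInducedMatchingPair {V : Type*} (G : SimpleGraph V) (r : ℕ) (a b : Fin r → V) : Prop :=
  IsMatchingPair G r a b ∧
    ∀ i j, i ≠ j → ¬ G.Adj (a i) (a j) ∧ ¬ G.Adj (a i) (b j) ∧ ¬ G.Adj (b i) (b j)

/-- An ordered matching: a matching `a₁b₁, …, a_r b_r` with `{a₁, …, a_r}` independent and
`aᵢbⱼ ∈ E(G) → i ≤ j`. -/
def IsOrderedMatchingPair {V : Type*} (G : SimpleGraph V) (r : ℕ) (a b : Fin r → V) : Prop :=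
  IsMatchingPair G r a b ∧ (∀ i j, ¬ G.Adj (a i) (a j)) ∧
    ∀ i j, G.Adj (a i) (b j) → i ≤ j

/-- The induced matching number. -/
noncomputable def indMatchNum {V : Type*} (G : SimpleGraph V) : ℕ :=
  sSup {r | ∃ a b : Fin r → V, IsInducedMatchingPair G r a b}

/-- The ordered matching number. -/
noncomputable def ordMatchNum {V : Type*} (G : SimpleGraph V) : ℕ :=
  sSup {r | ∃ a b : Fin r → V, IsOrderedMatchingPair G r a b}

/-- A graph on `X ⊕ Y` is bipartite with parts `X` and `Y`: every edge joins
a vertex of `X` with a vertex of `Y`. -/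
def IsBipartiteOn {X Y : Type*} (G : SimpleGraph (X ⊕ Y)) : Prop :=
  ∀ u v, G.Adj u v → (u.isLeft ∧ v.isRight) ∨ (u.isRight ∧ v.isLeft)

/-- `G` has no isolated vertices. -/
def NoIsolated {V : Type*} (G : SimpleGraph V) : Prop :=
  ∀ v, ∃ w, G.Adj v w

/-- `CSet G I` is the set of vertices of `Y` whose neighbourhood in `X` is exactly `I`. -/
def CSet {X Y : Type*} (G : SimpleGraph (X ⊕ Y)) (I : Set X) : Set Y :=
  {y | ∀ x, G.Adj (Sum.inl x) (Sum.inr y) ↔ x ∈ I}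

/-- `cNum G I` is the number of vertices of `Y` whose neighbourhood in `X` is exactly `I`. -/
noncomputable def cNum {X Y : Type*} (G : SimpleGraph (X ⊕ Y)) (I : Set X) : ℕ :=
  (CSet G I).ncard

/-- The induced matching number of a bipartite graph `G` without isolated vertices is at
least `r` iff there are subsets `J₁, …, J_r` of `X`, none contained in the union of the
others, with `c_{J₁} ⋯ c_{J_r} > 0`. -/
lemma not_adj_inl_inl {X Y : Type*} {G : SimpleGraph (X ⊕ Y)} (hbip : IsBipartiteOn G)
    (u v : X) : ¬ G.Adj (Sum.inl u) (Sum.inl v) := by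
  intro h; rcases hbip _ _ h with ⟨h1, h2⟩ | ⟨h1, h2⟩ <;> simp at h1 h2

lemma not_adj_inr_inr {X Y : Type*} {G : SimpleGraph (X ⊕ Y)} (hbip : IsBipartiteOn G)
    (u v : Y) : ¬ G.Adj (Sum.inr u) (Sum.inr v) := by
  intro h; rcases hbip _ _ h with ⟨h1, h2⟩ | ⟨h1, h2⟩ <;> simp at h1 h2

lemma bddAbove_indSet {V : Type*} [Fintype V] (G : SimpleGraph V) :
    BddAbove {r | ∃ a b : Fin r → V, IsInducedMatchingPair G r a b} := by
  refine ⟨Fintype.card V, fun s hs => ?_⟩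
  obtain ⟨a, b, ⟨⟨_, ha, _⟩, _⟩⟩ := hs
  simpa using Fintype.card_le_of_injective a ha

theorem indMatchNum_ge_iff {X Y : Type*} [Fintype X] [Fintype Y]
    (G : SimpleGraph (X ⊕ Y)) (hbip : IsBipartiteOn G) (hiso : NoIsolated G)
    (r : ℕ) (hr : 0 < r) :
    r ≤ indMatchNum G ↔
      ∃ J : Fin r → Set X,
        (∀ i, ¬ J i ⊆ ⋃ j ∈ ({i}ᶜ : Set (Fin r)), J j) ∧ (∀ i, 0 < cNum G (J i)) := by

  constructor
  · intro hle
    have hne0 : ({s | ∃ a b : Fin s → (X ⊕ Y), IsInducedMatchingPair G s a b}).Nonempty := by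
      refine ⟨0, Fin.elim0, Fin.elim0, ⟨⟨fun i => i.elim0, fun i => i.elim0,
        fun i => i.elim0, fun i => i.elim0⟩, fun i => i.elim0⟩⟩
    have hmem := Nat.sSup_mem hne0 (bddAbove_indSet G)
    obtain ⟨a, b, ⟨⟨hadj, ha, hb, hab⟩, hind⟩⟩ := hmem
    have hcast : Function.Injective (Fin.castLE hle) := Fin.castLE_injective hle
    have hsplit : ∀ i : Fin r, ∃ x y, G.Adj (Sum.inl x) (Sum.inr y) ∧
        ((a (Fin.castLE hle i) = Sum.inl x ∧ b (Fin.castLE hle i) = Sum.inr y) ∨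
         (a (Fin.castLE hle i) = Sum.inr y ∧ b (Fin.castLE hle i) = Sum.inl x)) := by
      intro i
      have h := hadj (Fin.castLE hle i)
      rcases hbip _ _ h with ⟨h1, h2⟩ | ⟨h1, h2⟩
      · obtain ⟨x, hx⟩ := Sum.isLeft_iff.mp h1
        obtain ⟨y, hy⟩ := Sum.isRight_iff.mp h2
        exact ⟨x, y, by rw [hx, hy] at h; exact h, Or.inl ⟨hx, hy⟩⟩
      · obtain ⟨y, hy⟩ := Sum.isRight_iff.mp h1
        obtain ⟨x, hx⟩ := Sum.isLeft_iff.mp h2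
        exact ⟨x, y, by rw [hx, hy] at h; exact h.symm, Or.inr ⟨hy, hx⟩⟩
    choose x y hxy hcase using hsplit
    refine ⟨fun i => {x' | G.Adj (Sum.inl x') (Sum.inr (y i))}, ?_, ?_⟩
    · intro i hsub
      have hxi : x i ∈ {x' | G.Adj (Sum.inl x') (Sum.inr (y i))} := hxy i
      have hmem' := hsub hxi
      simp only [Set.mem_iUnion, Set.mem_compl_iff, Set.mem_singleton_iff] at hmem'
      obtain ⟨j, hj, hadj'⟩ := hmem'
      have hne' : Fin.castLE hle i ≠ Fin.castLE hle j := fun h => hj (hcast h).symm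
      have h1 := hind _ _ hne'
      have h2 := hind _ _ hne'.symm
      rcases hcase i with ⟨hai, hbi⟩ | ⟨hai, hbi⟩ <;>
        rcases hcase j with ⟨haj, hbj⟩ | ⟨haj, hbj⟩
      · exact h1.2.1 (by have h : G.Adj (Sum.inl (x i)) (Sum.inr (y j)) := hadj'; rw [← hai, ← hbj] at h; exact h)
      · exact h1.1 (by have h : G.Adj (Sum.inl (x i)) (Sum.inr (y j)) := hadj'; rw [← hai, ← haj] at h; exact h)
      · exact h1.2.2 (by have h : G.Adj (Sum.inl (x i)) (Sum.inr (y j)) := hadj'; rw [← hbi, ← hbj] at h; exact h)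
      · exact h2.2.1 (by have h := hadj'.symm; rw [← haj, ← hbi] at h; exact h)
    · intro i
      have : y i ∈ CSet G {x' | G.Adj (Sum.inl x') (Sum.inr (y i))} := fun x' => Iff.rfl
      exact (Set.ncard_pos (Set.toFinite _)).mpr ⟨y i, this⟩
  · rintro ⟨J, hJ, hc⟩
    have hx : ∀ i, ∃ xi, xi ∈ J i ∧ ∀ j, j ≠ i → xi ∉ J j := by
      intro i
      obtain ⟨xi, h1, h2⟩ := Set.not_subset.mp (hJ i)
      refine ⟨xi, h1, fun j hj hmem => h2 ?_⟩
      exact Set.mem_iUnion₂.mpr ⟨j, hj, hmem⟩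
    choose x hx1 hx2 using hx
    have hy : ∀ i, ∃ yi, yi ∈ CSet G (J i) := fun i =>
      Set.nonempty_of_ncard_ne_zero (hc i).ne'
    choose y hy using hy
    have hadjJ : ∀ i x', G.Adj (Sum.inl x') (Sum.inr (y i)) ↔ x' ∈ J i := fun i => hy i
    have hxinj : Function.Injective x := by
      intro i j h
      by_contra hij
      exact hx2 j i (fun e => hij (e ▸ rfl)) (h ▸ hx1 i)
    have hyinj : Function.Injective y := by
      intro i j h
      by_contra hij
      have : x i ∈ J j := (hadjJ j (x i)).mp (h ▸ (hadjJ i (x i)).mpr (hx1 i))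
      exact hx2 i j (fun e => hij e.symm) this
    refine le_csSup (bddAbove_indSet G)
      ⟨fun i => Sum.inl (x i), fun i => Sum.inr (y i), ⟨⟨?_, ?_, ?_, ?_⟩, ?_⟩⟩
    · exact fun i => (hadjJ i (x i)).mpr (hx1 i)
    · exact fun i j h => hxinj (Sum.inl_injective h)
    · exact fun i j h => hyinj (Sum.inr_injective h)
    · intro i j; simp
    · intro i j hij
      refine ⟨not_adj_inl_inl hbip _ _, fun h => ?_, not_adj_inr_inr hbip _ _⟩
      exact hx2 i j (fun e => hij e.symm) ((hadjJ j (x i)).mp h)
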